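/- Let f : U → ℂ be a function on an open connected set U ⊂ ℂ^m × ℂ such that f is bounded on U and complex analytic on U \ (U ∩ (ℂ^m × {0})). Then f extends to (equivalently, is) a complex analytic function on all of U. -/

import Mathlib

open scoped NNReal ENNReal Topology
open Set Filter Metric

section Curry

variable {E : Type*} [NormedAddCommGroup E] [NormedSpace ℂ E]
  {Θ : Type*} [TopologicalSpace Θ] [CompactSpace Θ]

/-- Curried analyticity: if `f` has a power series on a ball around `(a, w₀)` and the
continuous family `w : Θ → ℂ` stays at distance `≤ ρ` from `w₀` with `ρ + δ < R`, then any
map `Ψ : E → C(Θ, ℂ)` satisfying `Ψ z θ = f (z, w θ)` for `z` within `δ` of `a` is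
analytic at `a`. -/
theorem analyticAt_curry
    {f : E × ℂ → ℂ} {p : FormalMultilinearSeries ℂ (E × ℂ) ℂ} {a : E} {w₀ : ℂ}
    {R ρ δ : ℝ≥0} (hf : HasFPowerSeriesOnBall f p (a, w₀) R)
    (hδ : 0 < δ) (hρδ : (ρ : ℝ≥0∞) + δ < R)
    (w : C(Θ, ℂ)) (hw : ∀ θ, ‖w θ - w₀‖₊ ≤ ρ)
    (Ψ : E → C(Θ, ℂ)) (hΨ : ∀ y : E, ‖y‖₊ < δ → ∀ θ, Ψ (a + y) θ = f (a + y, w θ)) :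
    AnalyticAt ℂ Ψ a := by
  classical
  have hRrad : (R : ℝ≥0∞) ≤ p.radius := hf.r_le
  have hρδrad : (ρ : ℝ≥0∞) + δ < p.radius := lt_of_lt_of_le hρδ hRrad
  have hρrad : (ρ : ℝ≥0∞) < p.radius := lt_of_le_of_lt le_self_add hρδrad
  have hradpos : 0 < p.radius := lt_of_le_of_lt zero_le hρδrad
  set ι : E →L[ℂ] E × ℂ := ContinuousLinearMap.inl ℂ E ℂ with hι
  have hιnorm : ∀ y : E, ‖ι y‖ = ‖y‖ := fun y => by
    simp [hι, Prod.norm_def]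
  have hινorm_le : ‖ι‖ ≤ 1 := by
    refine ContinuousLinearMap.opNorm_le_bound _ zero_le_one fun y => ?_
    rw [hιnorm, one_mul]
  -- the family of base points
  set x : Θ → E × ℂ := fun θ => ((0 : E), w θ - w₀) with hx
  have hxnn : ∀ θ, ‖x θ‖₊ ≤ ρ := fun θ => by
    simp only [hx, Prod.nnnorm_def', nnnorm_zero]
    simpa using hw θ
  have hxrad : ∀ θ, (‖x θ‖₊ : ℝ≥0∞) < p.radius := fun θ =>
    lt_of_le_of_lt (by exact_mod_cast hxnn θ) hρrad
  have hxball : ∀ θ, x θ ∈ EMetric.ball (0 : E × ℂ) p.radius := fun θ =>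
    mem_emetric_ball_zero_iff.2 (hxrad θ)
  -- the family of multilinear maps
  set M : (j : ℕ) → Θ → ContinuousMultilinearMap ℂ (fun _ : Fin j => E) ℂ :=
    fun j θ => (p.changeOrigin (x θ) j).compContinuousLinearMap (fun _ => ι) with hM
  -- the coefficient bounds
  set C : ℕ → ℝ≥0 := fun j =>
    ∑' s : Σ l : ℕ, { t : Finset (Fin (j + l)) // t.card = l }, ‖p (j + s.1)‖₊ * ρ ^ s.1
    with hC
  have hMC : ∀ j θ, ‖M j θ‖₊ ≤ C j := by
    intro j θ
    have h1 : ‖M j θ‖ ≤ ‖p.changeOrigin (x θ) j‖ := by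
      refine le_trans (ContinuousMultilinearMap.norm_compContinuousLinearMap_le _ _) ?_
      have hprod : (∏ _i : Fin j, ‖ι‖) ≤ 1 :=
        Finset.prod_le_one (fun i _ => ContinuousLinearMap.opNorm_nonneg _)
          (fun i _ => hινorm_le)
      calc ‖p.changeOrigin (x θ) j‖ * ∏ _i : Fin j, ‖ι‖
          ≤ ‖p.changeOrigin (x θ) j‖ * 1 :=
            mul_le_mul_of_nonneg_left hprod (norm_nonneg _)
        _ = ‖p.changeOrigin (x θ) j‖ := mul_one _
    have h1' : ‖M j θ‖₊ ≤ ‖p.changeOrigin (x θ) j‖₊ := h1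
    refine h1'.trans ?_
    refine (p.nnnorm_changeOrigin_le j (hxrad θ)).trans ?_
    refine Summable.tsum_le_tsum (fun s => ?_) ?_ ?_
    · exact mul_le_mul_right (pow_le_pow_left' (hxnn θ) _) _
    · exact p.changeOriginSeries_summable_aux₂ (hxrad θ) j
    · exact p.changeOriginSeries_summable_aux₂ hρrad j
  have hMcont : ∀ j, Continuous fun θ => M j θ := by
    intro j
    have h1 : ContinuousOn (fun y => p.changeOrigin y j) (EMetric.ball 0 p.radius) :=
      (p.hasFPowerSeriesOnBall_changeOrigin j hradpos).continuousOn
    have h2 : Continuous x := by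
      refine continuous_const.prodMk ?_
      exact (map_continuous w).sub continuous_const
    have h3 : Continuous fun θ => p.changeOrigin (x θ) j :=
      h1.comp_continuous h2 hxball
    exact (ContinuousMultilinearMap.compContinuousLinearMapL
      (fun _ : Fin j => ι)).continuous.comp h3
  -- The formal multilinear series of `Ψ` at `a`
  have hQaux : ∀ (j : ℕ) (y : Fin j → E), Continuous fun θ => M j θ y := by
    intro j y
    exact (continuous_eval_const y).comp (hMcont j)
  set Q : FormalMultilinearSeries ℂ E C(Θ, ℂ) := fun j =>
    MultilinearMap.mkContinuous
      { toFun := fun y => ⟨fun θ => M j θ y, hQaux j y⟩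
        map_update_add' := by
          intro inst m i u v
          ext θ
          simp [(M j θ).map_update_add]
        map_update_smul' := by
          intro inst m i c u
          ext θ
          simp [(M j θ).map_update_smul] }
      (C j) (by
        intro y
        refine (ContinuousMap.norm_le _ (by positivity)).2 fun θ => ?_
        refine ((M j θ).le_opNorm y).trans ?_
        have : ‖M j θ‖ ≤ (C j : ℝ) := by exact_mod_cast hMC j θ
        exact mul_le_mul_of_nonneg_right this (by positivity)) with hQ
  have hQnorm : ∀ j, ‖Q j‖₊ ≤ C j := by
    intro j
    have : ‖Q j‖ ≤ (C j : ℝ) :=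
      MultilinearMap.mkContinuous_norm_le _ (C j).coe_nonneg _
    exact_mod_cast this
  have hCsum : Summable fun j => C j * δ ^ j := by
    have h1 := p.changeOriginSeries_summable_aux₁ (r := ρ) (r' := δ) hρδrad
    have h2 := (NNReal.summable_sigma.1 h1).2
    simp only [NNReal.tsum_mul_right] at h2
    exact h2
  have hQrad : (δ : ℝ≥0∞) ≤ Q.radius := by
    refine Q.le_radius_of_summable_nnnorm ?_
    refine NNReal.summable_of_le (fun j => ?_) hCsum
    exact mul_le_mul_left (hQnorm j) _
  have key : ∀ y : E, ‖y‖₊ < δ → HasSum (fun j => Q j fun _ => y) (Ψ (a + y)) := by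
    intro y hy
    have hyδ : (‖y‖₊ : ℝ≥0∞) < δ := by exact_mod_cast hy
    -- summability in `C(Θ, ℂ)`
    have hQy : ∀ j, ‖Q j fun _ => y‖ ≤ (C j * ‖y‖₊ ^ j : ℝ≥0) := by
      intro j
      refine ((Q j).le_opNorm _).trans ?_
      have h1 : ‖Q j‖ ≤ (C j : ℝ) := by exact_mod_cast hQnorm j
      have h2 : (∏ _i : Fin j, ‖y‖) = ‖y‖ ^ j := by
        simp [Finset.prod_const]
      rw [h2]
      have h3 : ((C j * ‖y‖₊ ^ j : ℝ≥0) : ℝ) = (C j : ℝ) * ‖y‖ ^ j := by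
        push_cast
        rfl
      rw [h3]
      exact mul_le_mul_of_nonneg_right h1 (by positivity)
    have hsumN : Summable fun j => (C j * ‖y‖₊ ^ j : ℝ≥0) := by
      refine NNReal.summable_of_le (fun j => ?_) hCsum
      exact mul_le_mul_right (pow_le_pow_left' hy.le _) _
    have hsum : Summable fun j => Q j fun _ => y := by
      refine Summable.of_norm ?_
      refine Summable.of_nonneg_of_le (fun _ => norm_nonneg _) hQy ?_
      exact_mod_cast hsumN
    set S : C(Θ, ℂ) := ∑' j, Q j fun _ => y with hS
    have hSsum : HasSum (fun j => Q j fun _ => y) S := hsum.hasSum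
    have hSθ : ∀ θ, S θ = f (a + y, w θ) := by
      intro θ
      have e1 : S θ = ∑' j, (Q j fun _ => y) θ := by
        have := (ContinuousMap.evalCLM ℂ θ).map_tsum hsum
        simpa [ContinuousMap.evalCLM] using this
      have e2 : ∀ j, (Q j fun _ => y) θ = p.changeOrigin (x θ) j fun _ => ι y := by
        intro j
        simp only [hQ, MultilinearMap.coe_mkContinuous, ContinuousMap.coe_mk,
          MultilinearMap.coe_mk]
        simp [hM]
      have hιynn : ‖ι y‖₊ = ‖y‖₊ := by
        ext
        exact hιnorm y
      have hyball : ι y ∈ EMetric.ball (0 : E × ℂ) (p.changeOrigin (x θ)).radius := by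
        refine mem_emetric_ball_zero_iff.2 ?_
        refine lt_of_lt_of_le ?_ p.changeOrigin_radius
        rw [enorm_eq_nnnorm, hιynn, lt_tsub_iff_right]
        calc (‖y‖₊ : ℝ≥0∞) + ‖x θ‖₊
            ≤ (‖y‖₊ : ℝ≥0∞) + ρ := add_le_add_right (by exact_mod_cast hxnn θ) _
          _ < (δ : ℝ≥0∞) + ρ := ENNReal.add_lt_add_right ENNReal.coe_ne_top hyδ
          _ = (ρ : ℝ≥0∞) + δ := by rw [add_comm]
          _ < p.radius := hρδrad
      have e3 : HasSum (fun j => p.changeOrigin (x θ) j fun _ => ι y)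
          ((p.changeOrigin (x θ)).sum (ι y)) :=
        (p.changeOrigin (x θ)).hasSum hyball
      have e4 : (p.changeOrigin (x θ)).sum (ι y) = p.sum (x θ + ι y) := by
        refine p.changeOrigin_eval ?_
        calc (‖x θ‖₊ : ℝ≥0∞) + ‖ι y‖₊
            ≤ (ρ : ℝ≥0∞) + ‖y‖₊ := by
              rw [hιynn]
              exact add_le_add_left (by exact_mod_cast hxnn θ) _
          _ < (ρ : ℝ≥0∞) + δ := ENNReal.add_lt_add_left ENNReal.coe_ne_top hyδ
          _ < p.radius := hρδrad
      have hval : x θ + ι y = ((y, w θ - w₀) : E × ℂ) := by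
        simp [hx, hι, Prod.ext_iff]
      have e5 : p.sum (x θ + ι y) = f (a + y, w θ) := by
        have hmem : x θ + ι y ∈ EMetric.ball (0 : E × ℂ) (R : ℝ≥0∞) := by
          refine mem_emetric_ball_zero_iff.2 ?_
          rw [hval]
          have h1 : ‖((y, w θ - w₀) : E × ℂ)‖₊ = max ‖y‖₊ ‖w θ - w₀‖₊ :=
            Prod.nnnorm_def _
          rw [enorm_eq_nnnorm, h1, ENNReal.coe_max]
          refine max_lt ?_ ?_
          · exact (hyδ.trans_le le_add_self).trans hρδ
          · refine lt_of_le_of_lt (ENNReal.coe_le_coe.2 (hw θ)) ?_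
            exact lt_of_le_of_lt le_self_add hρδ
        have := hf.sum hmem
        rw [← this]
        congr 1
        rw [hval]
        simp [Prod.ext_iff]
      rw [e1]
      rw [tsum_congr e2, e3.tsum_eq, e4, e5]
    have hfin : S = Ψ (a + y) := by
      ext θ
      rw [hSθ θ, hΨ y hy θ]
    rw [← hfin]
    exact hSsum
  have hball : HasFPowerSeriesOnBall Ψ Q a (δ : ℝ≥0∞) :=
    { r_le := hQrad
      r_pos := by exact_mod_cast hδ
      hasSum := by
        intro y hy
        refine key y ?_
        have := mem_emetric_ball_zero_iff.1 hy
        exact_mod_cast this }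
  exact hball.analyticAt

end Curry

section ArcCLM

/-- Integration of a continuous function on `Icc α β` against the derivative of the
circle map, as a continuous linear functional. -/
noncomputable def arcCLM (r α β : ℝ) (hαβ : α ≤ β) : C(Icc α β, ℂ) →L[ℂ] ℂ :=
  LinearMap.mkContinuous
    { toFun := fun u => ∫ θ in α..β, (circleMap 0 r θ * Complex.I) * u (projIcc α β hαβ θ)
      map_add' := by
        intro u v
        have h : ∀ u : C(Icc α β, ℂ),
            Continuous fun θ => (circleMap 0 r θ * Complex.I) * u (projIcc α β hαβ θ) :=
          fun u => ((continuous_circleMap 0 r).mul continuous_const).mul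
            ((map_continuous u).comp continuous_projIcc)
        simp only [ContinuousMap.add_apply, mul_add]
        exact intervalIntegral.integral_add ((h u).intervalIntegrable _ _)
          ((h v).intervalIntegrable _ _)
      map_smul' := by
        intro c u
        simp only [ContinuousMap.smul_apply, smul_eq_mul, RingHom.id_apply]
        rw [← intervalIntegral.integral_const_mul]
        congr 1
        ext θ
        ring }
    (|r| * |β - α|)
    (by
      intro u
      simp only [LinearMap.coe_mk, AddHom.coe_mk]
      have hb : ∀ θ ∈ Set.uIoc α β,
          ‖(circleMap 0 r θ * Complex.I) * u (projIcc α β hαβ θ)‖ ≤ |r| * ‖u‖ := by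
        intro θ _
        rw [norm_mul, norm_mul]
        simp only [Complex.norm_I, mul_one]
        have h1 : ‖circleMap 0 r θ‖ = |r| := by
          simp [circleMap]
        rw [h1]
        exact mul_le_mul_of_nonneg_left (ContinuousMap.norm_coe_le_norm u _) (abs_nonneg r)
      have := intervalIntegral.norm_integral_le_of_norm_le_const hb
      calc ‖∫ θ in α..β, (circleMap 0 r θ * Complex.I) * u (projIcc α β hαβ θ)‖
          ≤ |r| * ‖u‖ * |β - α| := this
        _ = |r| * |β - α| * ‖u‖ := by ring)

theorem arcCLM_apply (r α β : ℝ) (hαβ : α ≤ β) (u : C(Icc α β, ℂ)) :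
    arcCLM r α β hαβ u = ∫ θ in α..β, (circleMap 0 r θ * Complex.I) * u (projIcc α β hαβ θ) :=
  rfl

end ArcCLM

/-- Riemann removable singularity theorem in several variables: a function on an open
connected `U ⊂ ℂ^m × ℂ` which is bounded on `U` and complex analytic off the hyperplane
`{s = 0}` extends to (is) a complex analytic function on all of `U`. -/
theorem stmt3 {m : ℕ} (U : Set ((Fin m → ℂ) × ℂ)) (hU : IsOpen U) (hconn : IsConnected U)
    (f : (Fin m → ℂ) × ℂ → ℂ)
    (hbdd : ∃ M : ℝ, ∀ x ∈ U, ‖f x‖ ≤ M)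
    (hana : ∀ x ∈ U, x.2 ≠ 0 → AnalyticAt ℂ f x) :
    ∃ g : (Fin m → ℂ) × ℂ → ℂ, (∀ x ∈ U, AnalyticAt ℂ g x) ∧
      ∀ x ∈ U, x.2 ≠ 0 → g x = f x := by
  classical
  obtain ⟨M, hM⟩ := hbdd
  set g : (Fin m → ℂ) × ℂ → ℂ := fun x =>
    Function.update (fun s => f (x.1, s)) 0
      (limUnder (𝓝[≠] (0 : ℂ)) (fun s => f (x.1, s))) x.2 with hgdef
  have hgf : ∀ x : (Fin m → ℂ) × ℂ, x.2 ≠ 0 → g x = f x := by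
    intro x hx2
    simp only [hgdef]
    rw [Function.update_of_ne hx2]
  refine ⟨g, ?_, fun x _ hx2 => hgf x hx2⟩
  intro x hx
  by_cases hx2 : x.2 = 0
  swap
  · -- off the hyperplane, `g` agrees with `f` near `x`
    have hopen : IsOpen {y : (Fin m → ℂ) × ℂ | y.2 ≠ 0} :=
      isOpen_ne.preimage continuous_snd
    refine (hana x hx hx2).congr ?_
    filter_upwards [hopen.mem_nhds hx2] with y hy
    exact (hgf y hy).symm
  -- the hard case: `x = (a, 0)`
  set a : Fin m → ℂ := x.1 with ha
  have hax : x = (a, 0) := by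
    rw [ha, ← hx2]
  rw [hax] at hx ⊢
  -- choose a closed polydisc inside U
  obtain ⟨ε, hε, hballU⟩ := Metric.isOpen_iff.1 hU _ hx
  set R₀ : ℝ := ε / 2 with hR₀def
  have hR₀ : 0 < R₀ := by positivity
  have hR₀ε : R₀ < ε := by
    rw [hR₀def]
    linarith
  have hsub : closedBall a R₀ ×ˢ closedBall (0 : ℂ) R₀ ⊆ U := by
    refine subset_trans ?_ hballU
    rintro ⟨z, s⟩ ⟨hz, hs⟩
    rw [mem_ball, Prod.dist_eq]
    exact max_lt (lt_of_le_of_lt (mem_closedBall.1 hz) hR₀ε)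
      (lt_of_le_of_lt (mem_closedBall.1 hs) hR₀ε)
  set r : ℝ := R₀ / 2 with hrdef
  have hr : 0 < r := by positivity
  have hr2 : r < R₀ := by
    rw [hrdef]
    linarith
  -- the slices are differentiable after the one-variable removable singularity theorem
  have hslice : ∀ z ∈ closedBall a R₀, DifferentiableOn ℂ
      (Function.update (fun s => f (z, s)) 0
        (limUnder (𝓝[≠] (0 : ℂ)) (fun s => f (z, s)))) (ball (0 : ℂ) R₀) := by
    intro z hz
    refine Complex.differentiableOn_update_limUnder_of_bddAbove
      (isOpen_ball.mem_nhds (mem_ball_self hR₀)) ?_ ?_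
    · intro s hs
      have hmem : (z, s) ∈ U := hsub ⟨hz, ball_subset_closedBall hs.1⟩
      have h1 : AnalyticAt ℂ (fun s : ℂ => ((z : Fin m → ℂ), s)) s :=
        analyticAt_const.prod analyticAt_id
      have h2 : AnalyticAt ℂ (fun s => f (z, s)) s :=
        (hana (z, s) hmem (by simpa using hs.2)).comp h1
      exact h2.differentiableAt.differentiableWithinAt
    · refine ⟨M, ?_⟩
      rintro - ⟨s, hs, rfl⟩
      exact hM (z, s) (hsub ⟨hz, ball_subset_closedBall hs.1⟩)
  -- the Cauchy integral formula for the slices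
  have hkey : ∀ z ∈ closedBall a R₀, ∀ s ∈ ball (0 : ℂ) r,
      (∮ w in C(0, r), (w - s)⁻¹ • f (z, w))
        = (2 * Real.pi * Complex.I : ℂ) • g (z, s) := by
    intro z hz s hs
    have hG := hslice z hz
    have h1 := Complex.circleIntegral_sub_inv_smul_of_differentiable_on_off_countable
      (countable_singleton (0 : ℂ)) hs
      (hG.continuousOn.mono (closedBall_subset_ball hr2))
      (fun w hw => hG.differentiableAt (isOpen_ball.mem_nhds (ball_subset_ball hr2.le hw.1)))
    have hgs : g (z, s) = Function.update (fun t => f (z, t)) 0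
        (limUnder (𝓝[≠] (0 : ℂ)) (fun t => f (z, t))) s := rfl
    rw [hgs, ← h1]
    refine circleIntegral.integral_congr hr.le fun w hw => ?_
    have hw0 : w ≠ 0 := by
      intro h
      rw [h] at hw
      rw [mem_sphere_iff_norm, sub_zero, norm_zero] at hw
      exact hr.ne hw
    simp [Function.update_of_ne hw0]
  -- the integrand of the Cauchy integral, as a function of all variables
  set u : ((Fin m → ℂ) × ℂ) × ℂ → ℂ := fun q => (q.2 - q.1.2)⁻¹ * f (q.1.1, q.2) with hu
  set aa : (Fin m → ℂ) × ℂ := (a, 0) with haa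
  have hγmem : ∀ θ : ℝ, circleMap 0 r θ ∈ closedBall (0 : ℂ) R₀ := by
    intro θ
    rw [mem_closedBall_zero_iff, norm_circleMap_zero, abs_of_pos hr]
    exact hr2.le
  have hγne : ∀ θ : ℝ, circleMap 0 r θ ≠ 0 := fun θ => circleMap_ne_center hr.ne'
  have huana : ∀ θ : ℝ, AnalyticAt ℂ u (aa, circleMap 0 r θ) := by
    intro θ
    have hwmem : (a, circleMap 0 r θ) ∈ U :=
      hsub ⟨mem_closedBall_self hR₀.le, hγmem θ⟩
    have h1 : AnalyticAt ℂ (fun q : ((Fin m → ℂ) × ℂ) × ℂ => (q.1.1, q.2))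
        (aa, circleMap 0 r θ) :=
      (analyticAt_fst.comp analyticAt_fst).prod analyticAt_snd
    have h2 : AnalyticAt ℂ (fun q : ((Fin m → ℂ) × ℂ) × ℂ => f (q.1.1, q.2))
        (aa, circleMap 0 r θ) :=
      AnalyticAt.comp (g := f) (f := fun q : ((Fin m → ℂ) × ℂ) × ℂ => (q.1.1, q.2))
        (hana _ hwmem (hγne θ)) h1
    have h3 : AnalyticAt ℂ (fun q : ((Fin m → ℂ) × ℂ) × ℂ => q.2 - q.1.2)
        (aa, circleMap 0 r θ) :=
      analyticAt_snd.sub (analyticAt_snd.comp analyticAt_fst)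
    have h4 : AnalyticAt ℂ (fun q : ((Fin m → ℂ) × ℂ) × ℂ => (q.2 - q.1.2)⁻¹)
        (aa, circleMap 0 r θ) := by
      refine h3.inv ?_
      simp [haa, hγne θ]
    exact h4.mul h2
  -- choose power series for `u` at the points of the circle
  have hexist : ∀ θ : ℝ, ∃ (R' : ℝ≥0) (p' : FormalMultilinearSeries ℂ
      (((Fin m → ℂ) × ℂ) × ℂ) ℂ),
      0 < R' ∧ HasFPowerSeriesOnBall u p' (aa, circleMap 0 r θ) R' := by
    intro θ
    obtain ⟨p', hp'⟩ := huana θ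
    obtain ⟨rr, hrr⟩ := hp'
    obtain ⟨R', hR'1, hR'2⟩ := ENNReal.lt_iff_exists_nnreal_btwn.1 hrr.r_pos
    refine ⟨R', p', ?_, hrr.mono ?_ hR'2.le⟩
    · exact_mod_cast hR'1
    · exact_mod_cast hR'1
  choose Rf pf hRf hpf using hexist
  -- a Lebesgue number for the circle cover
  set O : ℝ → Set ℝ :=
    fun θ' => {θ : ℝ | ‖circleMap 0 r θ - circleMap 0 r θ'‖ < (Rf θ' : ℝ) / 2} with hO
  have hOopen : ∀ θ', IsOpen (O θ') := by
    intro θ'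
    exact isOpen_lt (((continuous_circleMap 0 r).sub continuous_const).norm) continuous_const
  have hOcover : Icc (0 : ℝ) (2 * Real.pi) ⊆ ⋃ θ' : ℝ, O θ' := by
    intro θ _
    refine mem_iUnion.2 ⟨θ, ?_⟩
    have : (0 : ℝ) < (Rf θ : ℝ) / 2 := by
      have := hRf θ
      have h0 : (0 : ℝ) < (Rf θ : ℝ) := by exact_mod_cast this
      linarith
    simpa [hO] using this
  obtain ⟨δL, hδL, hLeb⟩ := lebesgue_number_lemma_of_metric isCompact_Icc hOopen hOcover
  -- the uniform partition of `[0, 2π]`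
  obtain ⟨N, hN⟩ := exists_nat_gt (2 * Real.pi / δL)
  have hNpos : 0 < N := by
    have h0 : (0 : ℝ) < 2 * Real.pi / δL := by positivity
    exact_mod_cast h0.trans hN
  have hNR : (0 : ℝ) < N := by exact_mod_cast hNpos
  set t : ℕ → ℝ := fun i => 2 * Real.pi * i / N with ht
  have ht0 : t 0 = 0 := by simp [ht]
  have htN : t N = 2 * Real.pi := by
    simp only [ht]
    field_simp
  have htmono : ∀ i : ℕ, t i ≤ t (i + 1) := by
    intro i
    have h1 : (2 * Real.pi * i) ≤ 2 * Real.pi * (i + 1 : ℕ) := by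
      push_cast
      nlinarith [Real.pi_pos]
    exact div_le_div_of_nonneg_right h1 hNR.le |>.trans_eq rfl
  have htdiff : ∀ i : ℕ, t (i + 1) - t i = 2 * Real.pi / N := by
    intro i
    rw [ht]
    push_cast
    field_simp
    ring
  have htmem : ∀ i : ℕ, i ≤ N → t i ∈ Icc (0 : ℝ) (2 * Real.pi) := by
    intro i hi
    constructor
    · rw [ht]
      positivity
    · rw [ht, div_le_iff₀ hNR]
      have : (i : ℝ) ≤ N := by exact_mod_cast hi
      nlinarith [Real.pi_pos]
  have h2πN : 2 * Real.pi / N < δL := by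
    rw [div_lt_iff₀ hNR]
    rw [div_lt_iff₀ hδL] at hN
    nlinarith [hN]
  -- the continuous family along the circle
  have hUcont : ∀ zs : (Fin m → ℂ) × ℂ, zs ∈ ball aa r →
      Continuous fun θ : ℝ => u (zs, circleMap 0 r θ) := by
    intro zs hzs
    rw [← ball_prod_same] at hzs
    obtain ⟨hz1, hz2⟩ := hzs
    have c1 : Continuous fun θ : ℝ => circleMap 0 r θ := continuous_circleMap 0 r
    have cf : Continuous fun θ : ℝ => f (zs.1, circleMap 0 r θ) := by
      rw [continuous_iff_continuousAt]
      intro θ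
      have hmem : (zs.1, circleMap 0 r θ) ∈ U :=
        hsub ⟨(ball_subset_ball hr2.le).trans ball_subset_closedBall hz1, hγmem θ⟩
      have hc2 : ContinuousAt (fun θ : ℝ => ((zs.1 : Fin m → ℂ), circleMap 0 r θ)) θ :=
        (continuous_const.prodMk c1).continuousAt
      exact ContinuousAt.comp (f := fun θ : ℝ => ((zs.1 : Fin m → ℂ), circleMap 0 r θ))
        ((hana _ hmem (hγne θ)).continuousAt) hc2
    have cinv : Continuous fun θ : ℝ => (circleMap 0 r θ - zs.2)⁻¹ :=
      (c1.sub continuous_const).inv₀ fun θ =>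
        sub_ne_zero.2 (circleMap_ne_mem_ball hz2 θ)
    exact cinv.mul cf
  -- the curried maps into continuous functions on the pieces
  set Ψ : (i : ℕ) → ((Fin m → ℂ) × ℂ) → C(Icc (t i) (t (i + 1)), ℂ) := fun i zs =>
    if h : zs ∈ ball aa r then
      ⟨fun θ => u (zs, circleMap 0 r ↑θ), (hUcont zs h).comp continuous_subtype_val⟩
    else 0 with hΨdef
  -- analyticity of each curried map at `aa`
  have hΨana : ∀ i : ℕ, i < N → AnalyticAt ℂ (Ψ i) aa := by
    intro i hi
    obtain ⟨θ', hθ'⟩ := hLeb (t i) (htmem i hi.le)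
    set ρ : ℝ≥0 := Rf θ' / 2 with hρ
    set rnn : ℝ≥0 := ⟨r, hr.le⟩ with hrnn
    set δ' : ℝ≥0 := min (Rf θ' / 4) (rnn / 2) with hδ'
    have hRfR : (0 : ℝ) < (Rf θ' : ℝ) := by exact_mod_cast hRf θ'
    have hrnn0 : rnn ≠ 0 := by
      intro h
      apply hr.ne'
      have := congrArg NNReal.toReal h
      exact this
    have hδ'pos : 0 < δ' := by
      rw [hδ']
      refine lt_min ?_ ?_
      · exact pos_iff_ne_zero.2 (div_ne_zero (hRf θ').ne' (by norm_num))
      · exact pos_iff_ne_zero.2 (div_ne_zero hrnn0 (by norm_num))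
    have hρδ : (ρ : ℝ≥0∞) + δ' < (Rf θ' : ℝ≥0∞) := by
      rw [← ENNReal.coe_add, ENNReal.coe_lt_coe, ← NNReal.coe_lt_coe]
      push_cast
      have h4 : (δ' : ℝ) ≤ (Rf θ' : ℝ) / 4 := by
        have h5 := NNReal.coe_le_coe.2 (min_le_left (Rf θ' / 4) (rnn / 2))
        rw [← hδ'] at h5
        push_cast at h5
        linarith
      rw [hρ]
      push_cast
      linarith
    have hδ'r : (δ' : ℝ) < r := by
      have h1 : (δ' : ℝ) ≤ (rnn : ℝ) / 2 := by
        have := min_le_right (Rf θ' / 4) (rnn / 2)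
        rw [hδ']
        exact_mod_cast this
      have h2 : (rnn : ℝ) = r := rfl
      rw [h2] at h1
      linarith
    -- the continuous parameter
    set w : C(Icc (t i) (t (i + 1)), ℂ) :=
      ⟨fun θ => circleMap 0 r ↑θ, (continuous_circleMap 0 r).comp continuous_subtype_val⟩
      with hwdef
    have hw : ∀ θ : Icc (t i) (t (i + 1)), ‖w θ - circleMap 0 r θ'‖₊ ≤ ρ := by
      intro θ
      have hθmem : (θ : ℝ) ∈ ball (t i) δL := by
        rw [mem_ball, Real.dist_eq, abs_of_nonneg (by linarith [θ.2.1] : (0:ℝ) ≤ (θ:ℝ) - t i)]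
        have h1 : (θ : ℝ) - t i ≤ t (i + 1) - t i := by linarith [θ.2.2]
        rw [htdiff i] at h1
        exact lt_of_le_of_lt h1 h2πN
      have hθO : (θ : ℝ) ∈ O θ' := hθ' hθmem
      rw [hO] at hθO
      rw [← NNReal.coe_le_coe, coe_nnnorm]
      rw [hρ]
      push_cast
      exact le_of_lt hθO
    have hΨcond : ∀ y : (Fin m → ℂ) × ℂ, ‖y‖₊ < δ' → ∀ θ,
        Ψ i (aa + y) θ = u (aa + y, w θ) := by
      intro y hy θ
      have hmem : aa + y ∈ ball aa r := by
        rw [mem_ball, dist_eq_norm]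
        simp only [add_sub_cancel_left]
        calc ‖y‖ < (δ' : ℝ) := by
              rw [← coe_nnnorm] at *
              exact_mod_cast hy
          _ < r := hδ'r
      simp only [hΨdef, dif_pos hmem]
      rfl
    exact analyticAt_curry (hpf θ') hδ'pos hρδ w hw (Ψ i) hΨcond
  -- the sum of the arc integrals is analytic at `aa`
  have hsumana : AnalyticAt ℂ (fun zs => (2 * Real.pi * Complex.I : ℂ)⁻¹ *
      ∑ i ∈ Finset.range N, arcCLM r (t i) (t (i + 1)) (htmono i) (Ψ i zs)) aa := by
    refine analyticAt_const.mul ?_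
    refine Finset.analyticAt_fun_sum _ fun i hi => ?_
    exact ((arcCLM r (t i) (t (i + 1)) (htmono i)).analyticAt _).comp
      (hΨana i (Finset.mem_range.1 hi))
  -- conclude by showing that `g` agrees with this analytic function near `aa`
  refine hsumana.congr ?_
  have hnb : ball aa r ∈ 𝓝 aa := isOpen_ball.mem_nhds (mem_ball_self hr)
  filter_upwards [hnb] with zs hzs
  have hzs' := hzs
  rw [← ball_prod_same] at hzs'
  obtain ⟨hz1, hz2⟩ := hzs'
  have hz1' : zs.1 ∈ closedBall a R₀ :=
    (ball_subset_ball hr2.le).trans ball_subset_closedBall hz1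
  have hterm : ∀ i ∈ Finset.range N, arcCLM r (t i) (t (i + 1)) (htmono i) (Ψ i zs)
      = ∫ θ in t i..t (i + 1), (circleMap 0 r θ * Complex.I) * u (zs, circleMap 0 r θ) := by
    intro i _
    rw [arcCLM_apply]
    refine intervalIntegral.integral_congr fun θ hθ => ?_
    rw [uIcc_of_le (htmono i)] at hθ
    simp only [hΨdef, dif_pos hzs]
    rw [projIcc_of_mem _ hθ]
    rfl
  have hWcont : Continuous fun θ : ℝ =>
      (circleMap 0 r θ * Complex.I) * u (zs, circleMap 0 r θ) :=
    ((continuous_circleMap 0 r).mul continuous_const).mul (hUcont zs hzs)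
  have hcalc : ∑ i ∈ Finset.range N, arcCLM r (t i) (t (i + 1)) (htmono i) (Ψ i zs)
      = (2 * Real.pi * Complex.I : ℂ) • g (zs.1, zs.2) := by
    rw [Finset.sum_congr rfl hterm]
    rw [intervalIntegral.sum_integral_adjacent_intervals
      (fun i _ => (hWcont).intervalIntegrable _ _)]
    rw [ht0, htN]
    have hcirc : (∫ θ in (0 : ℝ)..(2 * Real.pi),
        (circleMap 0 r θ * Complex.I) * u (zs, circleMap 0 r θ))
        = ∮ w in C(0, r), (w - zs.2)⁻¹ • f (zs.1, w) := by
      rw [circleIntegral]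
      refine intervalIntegral.integral_congr fun θ _ => ?_
      rw [deriv_circleMap]
      rw [smul_eq_mul, smul_eq_mul]
    rw [hcirc]
    exact hkey zs.1 hz1' zs.2 hz2
  have h2πI : (2 * Real.pi * Complex.I : ℂ) ≠ 0 := by
    simp [Real.pi_ne_zero, Complex.I_ne_zero]
  rw [hcalc, smul_eq_mul, inv_mul_cancel_left₀ h2πI]
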